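/- Let C and D be chain complexes over a commutative ring, let g : C → D be a chain homotopy equivalence, and let f : C → C be any chain map. Then the mapping cone of f and the mapping cone of g ∘ f are chain homotopy equivalent. -/

import Mathlib

open CategoryTheory in
/-- If `g : C ⟶ D` is a chain homotopy equivalence of complexes of
modules over a ring and `f : C ⟶ C` is any chain map, then the mapping cones of `f`
and of `g ∘ f` are chain homotopy equivalent. -/
theorem stmt11 (R : Type*) [Ring R]
    (C D : CochainComplex (ModuleCat R) ℤ) (f : C ⟶ C) (g : C ⟶ D)
    (hg : ∃ e : HomotopyEquiv C D, e.hom = g) :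
    Nonempty (HomotopyEquiv (CochainComplex.mappingCone f)
      (CochainComplex.mappingCone (f ≫ g))) := by
  obtain ⟨e, rfl⟩ := hg
  have h₁ := HomotopyCategory.mappingCone_triangleh_distinguished f
  have h₂ := HomotopyCategory.mappingCone_triangleh_distinguished (f ≫ e.hom)
  refine ⟨HomotopyCategory.homotopyEquivOfIso ?_⟩
  have comm : (Iso.refl _).hom ≫ (CochainComplex.mappingCone.triangleh (f ≫ e.hom)).mor₁ =
      (CochainComplex.mappingCone.triangleh f).mor₁ ≫
        (HomotopyCategory.isoOfHomotopyEquiv e).hom := by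
    dsimp [CochainComplex.mappingCone.triangleh, CochainComplex.mappingCone.triangle,
      Functor.mapTriangle_obj, HomotopyCategory.isoOfHomotopyEquiv]
    rw [Category.id_comp]
    exact (HomotopyCategory.quotient (ModuleCat R) (ComplexShape.up ℤ)).map_comp f e.hom
  exact (Pretriangulated.isoTriangleOfIso₁₂ _ _ h₁ h₂ (Iso.refl _)
    (HomotopyCategory.isoOfHomotopyEquiv e) comm) |> Pretriangulated.Triangle.π₃.mapIso
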